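/- arXiv:1501.00123 — 4 statements merged into one kernel-verified Lean document; each statement's English description precedes it below -/
import Mathlib

section
/- Let Q ⊂ ℝ^m be the standard order-polytope simplex {0 ≤ v₁ ≤ v₂ ≤ ... ≤ v_m ≤ 1} and let λ(v) = ∑ c_i v_i be an integer linear form taking pairwise distinct values on the m+1 vertices of Q. Then the generating function G(q,z) = ∑_{N≥0} (∑_{x ∈ ℤ^m ∩ NQ} q^{λ(x)}) z^N, viewed as a formal power series in z over ℚ(q), equals a rational function whose denominator is ∏_{w ∈ V(Q)} (1 - q^{λ(w)} z), where V(Q) is the vertex set of Q. -/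
open Finset PowerSeries
noncomputable abbrev K := RatFunc ℚ

lemma rescale_C' (a b : K) : PowerSeries.rescale a (PowerSeries.C b) = PowerSeries.C b := by
  ext n
  simp only [PowerSeries.coeff_rescale, PowerSeries.coeff_C]
  split_ifs with h <;> simp [h]

lemma rescale_onesub (b a : K) : PowerSeries.rescale a (1 - PowerSeries.C b * PowerSeries.X) = 1 - PowerSeries.C (b * a) * PowerSeries.X := by
  rw [map_sub, map_one, map_mul, PowerSeries.rescale_X, rescale_C', map_mul]
  ring

lemma mk_psum_mul (f : ℕ → K) :
    (PowerSeries.mk fun N => ∑ t ∈ Finset.range (N + 1), f t) * (1 - PowerSeries.X) =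
      PowerSeries.mk f := by
  ext n
  rw [mul_sub, mul_one, map_sub]
  cases n with
  | zero => simp
  | succ n =>
    rw [PowerSeries.coeff_succ_mul_X, PowerSeries.coeff_mk, PowerSeries.coeff_mk,
      PowerSeries.coeff_mk, Finset.sum_range_succ]
    ring

lemma zpow_helper (e : ℤ) (t : ℕ) (s : ℤ) :
    ((RatFunc.X : K) ^ e) ^ t * (RatFunc.X : K) ^ s = (RatFunc.X : K) ^ (e * t + s) := by
  rw [zpow_add₀ RatFunc.X_ne_zero, ← zpow_natCast ((RatFunc.X : K) ^ e) t, ← zpow_mul]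

lemma step1 (m N : ℕ) (c : Fin (m + 1) → ℤ) :
    (∑ x ∈ Finset.univ.filter
        (fun x : Fin (m + 1) → Fin (N + 1) => ∀ i j, i ≤ j → x i ≤ x j),
      (RatFunc.X : K) ^ (∑ i, c i * (x i : ℤ)))
    = ∑ t ∈ Finset.range (N + 1),
        ((RatFunc.X : K) ^ (c (Fin.last m))) ^ t *
        (∑ y ∈ Finset.univ.filter
            (fun y : Fin m → Fin (t + 1) => ∀ i j, i ≤ j → y i ≤ y j),
          (RatFunc.X : K) ^ (∑ i, c i.castSucc * (y i : ℤ))) := by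
  rw [← Fin.sum_univ_eq_sum_range (fun t =>
        ((RatFunc.X : K) ^ (c (Fin.last m))) ^ t *
        (∑ y ∈ Finset.univ.filter
            (fun y : Fin m → Fin (t + 1) => ∀ i j, i ≤ j → y i ≤ y j),
          (RatFunc.X : K) ^ (∑ i, c i.castSucc * (y i : ℤ)))) (N + 1)]
  rw [← Finset.sum_fiberwise _ (fun x => x (Fin.last m)) _]
  refine Finset.sum_congr rfl fun t _ => ?_
  rw [Finset.mul_sum]
  refine Finset.sum_bij'
    (fun x hx => fun j : Fin m =>
      (⟨(x j.castSucc : ℕ), by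
        have hx' := Finset.mem_filter.mp hx
        have hm := (Finset.mem_filter.mp hx'.1).2
        have hlast : x (Fin.last m) = t := hx'.2
        have := hm j.castSucc (Fin.last m) (Fin.le_last _)
        rw [hlast] at this
        omega⟩ : Fin ((t : ℕ) + 1)))
    (fun y hy => Fin.snoc (fun i => Fin.castLE (by omega) (y i)) t)
    ?_ ?_ ?_ ?_ ?_
  · intro x hx
    simp only [Finset.mem_filter, Finset.mem_univ, true_and]
    intro i j hij
    have hx' := Finset.mem_filter.mp hx
    have hm := (Finset.mem_filter.mp hx'.1).2
    exact hm i.castSucc j.castSucc (by simpa using hij)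
  · intro y hy
    have hm := (Finset.mem_filter.mp hy).2
    simp only [Finset.mem_filter, Finset.mem_univ, true_and]
    constructor
    · intro i j hij
      rcases Fin.eq_castSucc_or_eq_last j with ⟨j', rfl⟩ | rfl
      · rcases Fin.eq_castSucc_or_eq_last i with ⟨i', rfl⟩ | rfl
        · rw [Fin.snoc_castSucc, Fin.snoc_castSucc]
          exact hm i' j' (by simpa using hij)
        · rw [Fin.le_castSucc_iff] at hij
          exact absurd hij (by simp [Fin.lt_iff_val_lt_val, Fin.le_iff_val_le_val] at hij ⊢)
      · rw [Fin.snoc_last]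
        rcases Fin.eq_castSucc_or_eq_last i with ⟨i', rfl⟩ | rfl
        · rw [Fin.snoc_castSucc]
          have : (y i' : ℕ) ≤ (t : ℕ) := by omega
          simpa [Fin.le_iff_val_le_val] using this
        · simp [Fin.snoc_last]
    · simp [Fin.snoc_last]
  · intro x hx
    funext i
    rcases Fin.eq_castSucc_or_eq_last i with ⟨i', rfl⟩ | rfl
    · simp only [Fin.snoc_castSucc]
      ext
      simp
    · simp only [Fin.snoc_last]
      exact ((Finset.mem_filter.mp hx).2).symm
  · intro y hy
    funext i
    ext
    simp [Fin.snoc_castSucc]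
  · intro x hx
    rw [zpow_helper]
    congr 1
    rw [Fin.sum_univ_castSucc (fun i => c i * ((x i : ℕ) : ℤ))]
    have hlast : x (Fin.last m) = t := (Finset.mem_filter.mp hx).2
    simp only [hlast]
    push_cast
    ring

lemma geom_inv : (PowerSeries.mk fun _ => (1 : K)) * (1 - PowerSeries.X) = 1 := by
  ext n
  rw [mul_sub, mul_one, map_sub]
  cases n with
  | zero => simp
  | succ n =>
    rw [PowerSeries.coeff_succ_mul_X, PowerSeries.coeff_mk, PowerSeries.coeff_mk]
    simp [PowerSeries.coeff_one]

lemma key (m : ℕ) : ∀ c : Fin m → ℤ,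
    (PowerSeries.mk fun N => ∑ x ∈ Finset.univ.filter
        (fun x : Fin m → Fin (N + 1) => ∀ i j : Fin m, i ≤ j → x i ≤ x j),
        (RatFunc.X : K) ^ (∑ i : Fin m, c i * (x i : ℤ))) *
      ∏ k : Fin (m + 1),
        (1 - PowerSeries.C ((RatFunc.X : K) ^
            (∑ i ∈ Finset.univ.filter (fun i : Fin m => (k : ℕ) ≤ (i : ℕ)), c i)) *
          PowerSeries.X) = 1 := by
  induction m with
  | zero =>
    intro c
    have h1 : ∀ N : ℕ, (∑ x ∈ Finset.univ.filter
        (fun x : Fin 0 → Fin (N + 1) => ∀ i j : Fin 0, i ≤ j → x i ≤ x j),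
        (RatFunc.X : K) ^ (∑ i : Fin 0, c i * (x i : ℤ))) = 1 := by
      intro N
      rw [Finset.filter_true_of_mem (fun x _ => fun i => i.elim0)]
      simp
    simp only [h1]
    rw [Fin.prod_univ_one]
    have : (Finset.univ.filter (fun i : Fin 0 => ((0 : Fin 1) : ℕ) ≤ (i : ℕ))) = ∅ := by
      simp
    rw [this]
    simpa using geom_inv
  | succ m ih =>
    intro c
    set c' : Fin m → ℤ := fun i => c i.castSucc with hc'
    set a : K := (RatFunc.X : K) ^ (c (Fin.last m)) with ha
    -- rewrite the numerator series
    have hmk : (PowerSeries.mk fun N => ∑ x ∈ Finset.univ.filter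
          (fun x : Fin (m + 1) → Fin (N + 1) => ∀ i j, i ≤ j → x i ≤ x j),
          (RatFunc.X : K) ^ (∑ i, c i * (x i : ℤ)))
        = PowerSeries.mk fun N => ∑ t ∈ Finset.range (N + 1),
            a ^ t * (∑ y ∈ Finset.univ.filter
                (fun y : Fin m → Fin (t + 1) => ∀ i j, i ≤ j → y i ≤ y j),
              (RatFunc.X : K) ^ (∑ i, c' i * (y i : ℤ))) := by
      ext N
      rw [PowerSeries.coeff_mk, PowerSeries.coeff_mk]
      exact step1 m N c
    -- the product: peel off the last factor
    have hlastfac : (1 - PowerSeries.C ((RatFunc.X : K) ^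
          (∑ i ∈ Finset.univ.filter
              (fun i : Fin (m + 1) => ((Fin.last (m + 1) : Fin (m + 2)) : ℕ) ≤ (i : ℕ)), c i)) *
        PowerSeries.X) = 1 - PowerSeries.X := by
      have : (Finset.univ.filter
          (fun i : Fin (m + 1) => ((Fin.last (m + 1) : Fin (m + 2)) : ℕ) ≤ (i : ℕ))) = ∅ := by
        apply Finset.filter_false_of_mem
        intro i _
        simp only [Fin.coe_castSucc, Fin.val_last]
        have := i.isLt
        omega
      rw [this]
      simp
    have hE : ∀ k : Fin (m + 1),
        (∑ i ∈ Finset.univ.filter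
            (fun i : Fin (m + 1) => ((k.castSucc : Fin (m + 2)) : ℕ) ≤ (i : ℕ)), c i)
        = (∑ i ∈ Finset.univ.filter (fun i : Fin m => (k : ℕ) ≤ (i : ℕ)), c' i)
          + c (Fin.last m) := by
      intro k
      rw [Finset.sum_filter, Finset.sum_filter,
        Fin.sum_univ_castSucc (fun i : Fin (m + 1) =>
          if ((k.castSucc : Fin (m + 2)) : ℕ) ≤ (i : ℕ) then c i else 0)]
      rw [if_pos (by simp only [Fin.coe_castSucc, Fin.val_last]; omega)]
      congr 1
    have hprod : (∏ k : Fin (m + 2),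
          (1 - PowerSeries.C ((RatFunc.X : K) ^
              (∑ i ∈ Finset.univ.filter
                  (fun i : Fin (m + 1) => (k : ℕ) ≤ (i : ℕ)), c i)) * PowerSeries.X))
        = (PowerSeries.rescale a (∏ k : Fin (m + 1),
            (1 - PowerSeries.C ((RatFunc.X : K) ^
                (∑ i ∈ Finset.univ.filter (fun i : Fin m => (k : ℕ) ≤ (i : ℕ)), c' i)) *
              PowerSeries.X))) * (1 - PowerSeries.X) := by
      rw [Fin.prod_univ_castSucc, hlastfac, map_prod]
      congr 1
      apply Finset.prod_congr rfl
      intro k _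
      rw [hE k, zpow_add₀ RatFunc.X_ne_zero, rescale_onesub]
    rw [hmk, hprod, mul_comm (PowerSeries.rescale a _), ← mul_assoc, mk_psum_mul,
      ← PowerSeries.rescale_mk, ← map_mul, ih c']
    exact map_one _

open scoped PowerSeries

/-- For the order simplex `Q = {0 ≤ v₁ ≤ ⋯ ≤ v_m ≤ 1}` and an integer
linear form `λ(v) = ∑ c_i v_i` taking pairwise distinct values on the `m+1` vertices
`v^k` of `Q` (where `λ(v^k) = ∑_{i ≥ k} c_i`), the generating function
`G(q,z) = ∑_{N ≥ 0} W_λ(NQ, q) z^N` (a power series in `z` over `ℚ(q)`) is a rational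
function with denominator `∏_{w ∈ V(Q)} (1 - q^{λ(w)} z)`. -/
theorem generating_function_order_simplex_rational (m : ℕ) (c : Fin m → ℤ)
    (L : Fin (m + 1) → ℤ)
    (hL : ∀ k : Fin (m + 1), L k = ∑ i ∈ Finset.univ.filter (fun i : Fin m => (k : ℕ) ≤ (i : ℕ)), c i)
    (hdist : Function.Injective L)
    (W : ℕ → RatFunc ℚ)
    (hW : ∀ N : ℕ, W N =
      ∑ x ∈ Finset.univ.filter
          (fun x : Fin m → Fin (N + 1) => ∀ i j : Fin m, i ≤ j → x i ≤ x j),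
        (RatFunc.X : RatFunc ℚ) ^ (∑ i : Fin m, c i * (x i : ℤ))) :
    ∃ Num : Polynomial (RatFunc ℚ),
      (PowerSeries.mk W) *
          ∏ k : Fin (m + 1),
            (1 - PowerSeries.C ((RatFunc.X : RatFunc ℚ) ^ (L k)) * PowerSeries.X) =
        (Num : PowerSeries (RatFunc ℚ)) := by
  refine ⟨1, ?_⟩
  rw [Polynomial.coe_one]
  have hWf : W = fun N => ∑ x ∈ Finset.univ.filter
      (fun x : Fin m → Fin (N + 1) => ∀ i j : Fin m, i ≤ j → x i ≤ x j),
      (RatFunc.X : RatFunc ℚ) ^ (∑ i : Fin m, c i * (x i : ℤ)) := funext hW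
  rw [hWf]
  simp only [hL]
  exact key m c
end

section
/- Let X be a finite poset. The order polytope P_X is the union, over all linear extensions σ of the partial order on X, of the order polytopes P_{X,σ} of the corresponding linear orders, and the interiors of these simplices are pairwise disjoint; in particular the simplices P_{X,σ} form a triangulation of P_X. -/
open Finset in
theorem aux_exists {X : Type*} [Fintype X] [PartialOrder X]
    (v : X → ℝ) (hv : ∀ x x' : X, x ≤ x' → v x ≤ v x') :
    ∃ e : X ≃ Fin (Fintype.card X),
      (∀ x x' : X, x ≤ x' → e x ≤ e x') ∧ (∀ x x' : X, e x ≤ e x' → v x ≤ v x') := by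
  classical
  set f : X → Lex (ℝ × LinearExtension X) := fun x => toLex (v x, toLinearExtension x) with hf
  have hfinj : Function.Injective f := by
    intro a b h
    have h2 := congrArg (fun p => (ofLex p).2) h
    have h3 : toLinearExtension a = toLinearExtension b := by simpa [f] using h2
    exact h3
  have hle : ∀ a b : X, f a ≤ f b ↔ v a < v b ∨ v a = v b ∧
      toLinearExtension a ≤ toLinearExtension b := by
    intro a b
    simp [f, Prod.Lex.le_iff]
  set s : Finset (Lex (ℝ × LinearExtension X)) := Finset.univ.image f with hs
  have hcard : s.card = Fintype.card X := by
    rw [hs, Finset.card_image_of_injective _ hfinj, Finset.card_univ]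
  have hmem : ∀ x, f x ∈ s := fun x => Finset.mem_image_of_mem f (Finset.mem_univ x)
  set g : X → Fin (Fintype.card X) := fun x => (s.orderIsoOfFin hcard).symm ⟨f x, hmem x⟩ with hg
  have hgiff : ∀ a b : X, g a ≤ g b ↔ f a ≤ f b := by
    intro a b
    rw [hg]
    simp only [← (s.orderIsoOfFin hcard).symm.le_iff_le]
    exact Iff.rfl.symm.trans (by rw [(s.orderIsoOfFin hcard).symm.le_iff_le, Subtype.mk_le_mk])
  have hginj : Function.Injective g := by
    intro a b h
    apply hfinj
    have := (s.orderIsoOfFin hcard).symm.injective h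
    exact Subtype.mk_eq_mk.mp this
  have hgbij : Function.Bijective g := (Fintype.bijective_iff_injective_and_card g).mpr ⟨hginj, (Fintype.card_fin _).symm⟩
  refine ⟨Equiv.ofBijective g hgbij, ?_, ?_⟩
  · intro x x' hxx'
    show g x ≤ g x'
    rw [hgiff, hle]
    rcases lt_or_eq_of_le (hv _ _ hxx') with h | h
    · exact Or.inl h
    · exact Or.inr ⟨h, toLinearExtension.monotone hxx'⟩
  · intro x x' hxx'
    have := (hgiff x x').mp hxx'
    rcases (hle x x').mp this with h | h
    · exact h.le
    · exact h.1.le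

theorem aux_interior {X : Type*} [Fintype X] [DecidableEq X] {n : ℕ} (e : X ≃ Fin n)
    {v : X → ℝ}
    (hv : v ∈ interior {v : X → ℝ |
      (∀ x x' : X, e x ≤ e x' → v x ≤ v x') ∧ ∀ x, v x ∈ Set.Icc (0 : ℝ) 1})
    {x x' : X} (h : e x < e x') : v x < v x' := by
  obtain ⟨ε, hε, hball⟩ := Metric.isOpen_iff.mp isOpen_interior v hv
  have hball' := hball.trans interior_subset
  set w := Function.update v x (v x + ε / 2) with hw
  have hwb : w ∈ Metric.ball v ε := by
    rw [Metric.mem_ball, dist_pi_lt_iff hε]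
    intro b
    by_cases hb : b = x
    · rw [hb, hw, Function.update_self, Real.dist_eq]
      have : v x + ε / 2 - v x = ε / 2 := by ring
      rw [this, abs_of_pos (by linarith)]
      linarith
    · rw [hw, Function.update_of_ne hb, dist_self]; exact hε
  have hxx' : x ≠ x' := fun hh => absurd (hh ▸ h) (lt_irrefl _)
  have hle := (hball' hwb).1 x x' h.le
  rw [hw, Function.update_self, Function.update_of_ne (Ne.symm hxx')] at hle
  linarith



/-- For a finite poset `X`, the order polytope `P_X` is the union of the
simplices `P_{X,σ}` over all linear extensions `σ` of the partial order (encoded as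
order-preserving bijections `e : X ≃ Fin |X|`), and the interiors of these simplices
are pairwise disjoint; i.e. the `P_{X,σ}` triangulate `P_X`. -/
theorem order_polytope_triangulation
    (X : Type*) [Fintype X] [PartialOrder X]
    (P : (X ≃ Fin (Fintype.card X)) → Set (X → ℝ))
    (hP : ∀ e, P e = {v : X → ℝ |
        (∀ x x' : X, e x ≤ e x' → v x ≤ v x') ∧ ∀ x, v x ∈ Set.Icc (0 : ℝ) 1}) :
    ({v : X → ℝ | (∀ x x' : X, x ≤ x' → v x ≤ v x') ∧ ∀ x, v x ∈ Set.Icc (0 : ℝ) 1} =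
        ⋃ e ∈ {e : X ≃ Fin (Fintype.card X) | ∀ x x' : X, x ≤ x' → e x ≤ e x'}, P e) ∧
      Set.Pairwise {e : X ≃ Fin (Fintype.card X) | ∀ x x' : X, x ≤ x' → e x ≤ e x'}
        (fun e e' => Disjoint (interior (P e)) (interior (P e'))) := by
  classical
  constructor
  · ext v
    constructor
    · rintro ⟨hmono, hIcc⟩
      obtain ⟨e, he1, he2⟩ := aux_exists v hmono
      exact Set.mem_biUnion he1 (by rw [hP]; exact ⟨he2, hIcc⟩)
    · rintro hv
      obtain ⟨e, he, hve⟩ := Set.mem_iUnion₂.mp hv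
      rw [hP] at hve
      exact ⟨fun x x' hxx' => hve.1 x x' (he x x' hxx'), hve.2⟩
  · intro e he e' he' hne
    rw [Set.disjoint_left]
    intro u hu hu'
    rw [hP] at hu
    rw [hP] at hu'
    apply hne
    have key : ∀ x x' : X, e x < e x' ↔ e' x < e' x' := by
      intro x x'
      constructor
      · intro h
        have hv := aux_interior e hu h
        rcases lt_trichotomy (e' x) (e' x') with h' | h' | h'
        · exact h'
        · cases e'.injective h'; exact absurd h (lt_irrefl _)
        · exact absurd (aux_interior e' hu' h') (not_lt.mpr hv.le)
      · intro h
        have hv := aux_interior e' hu' h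
        rcases lt_trichotomy (e x) (e x') with h' | h' | h'
        · exact h'
        · cases e.injective h'; exact absurd h (lt_irrefl _)
        · exact absurd (aux_interior e hu h') (not_lt.mpr hv.le)
    have hsm : StrictMono (fun i => e' (e.symm i) : Fin (Fintype.card X) → Fin (Fintype.card X)) := by
      intro i j hij
      have : e (e.symm i) < e (e.symm j) := by simpa using hij
      exact (key _ _).mp this
    have hrange : Set.range (fun i => e' (e.symm i) : Fin (Fintype.card X) → Fin (Fintype.card X))
        = Set.range (id : Fin (Fintype.card X) → Fin (Fintype.card X)) := by
      rw [Set.range_id]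
      exact Set.range_eq_univ.mpr (e'.surjective.comp e.symm.surjective)
    haveI : WellFoundedLT (Fin (Fintype.card X)) := inferInstance
    have hid := (StrictMono.range_inj (β := Fin (Fintype.card X)) (γ := Fin (Fintype.card X)) hsm strictMono_id).mp hrange
    refine Equiv.ext fun x => ?_
    have := congrFun hid (e x)
    simpa using this.symm
end

section
/- Partial fraction degree bound: let e₀ > e₁ > ... > e_k be integers and m₀,...,m_k positive integers, and write ∏_{j=0}^{k} (1 − q^{e_j} z)^{−m_j} = ∑_{j=0}^{k} ∑_{i=1}^{m_j} C_{ij}(q) (1 − q^{e_j} z)^{−i} as the partial fraction decomposition with respect to z over the field ℚ(q). Then each coefficient C_{ij}(q) ∈ ℚ(q), when expanded as a Laurent series in q^{−1}, has maximal q-degree at most e_j − e₀. -/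
noncomputable section
open Polynomial PowerSeries

abbrev Kq := RatFunc ℚ

namespace PFAux

lemma Xz_ne (a : ℤ) : ((RatFunc.X : Kq) ^ a) ≠ 0 := zpow_ne_zero _ RatFunc.X_ne_zero

lemma intDegree_pow {x : Kq} (hx : x ≠ 0) (n : ℕ) : (x ^ n).intDegree = n * x.intDegree := by
  induction n with
  | zero => simp [RatFunc.intDegree_one]
  | succ n ih =>
    rw [pow_succ, RatFunc.intDegree_mul (pow_ne_zero _ hx) hx, ih]
    push_cast; ring

lemma intDegree_inv {x : Kq} (hx : x ≠ 0) : x⁻¹.intDegree = -x.intDegree := by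
  have h := RatFunc.intDegree_mul hx (inv_ne_zero hx)
  rw [mul_inv_cancel₀ hx, RatFunc.intDegree_one] at h
  linarith

lemma intDegree_X_zpow (a : ℤ) : ((RatFunc.X : Kq) ^ a).intDegree = a := by
  induction a using Int.induction_on with
  | zero => simp [RatFunc.intDegree_one]
  | succ n ih =>
    rw [zpow_add₀ RatFunc.X_ne_zero, RatFunc.intDegree_mul (Xz_ne _) (by simp [RatFunc.X_ne_zero]),
      ih, zpow_one, RatFunc.intDegree_X]
  | pred n ih =>
    rw [show (-(n:ℤ) - 1) = (-n) + (-1) by ring, zpow_add₀ RatFunc.X_ne_zero,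
      RatFunc.intDegree_mul (Xz_ne _) (Xz_ne _), ih, zpow_neg, zpow_one,
      intDegree_inv RatFunc.X_ne_zero, RatFunc.intDegree_X]

lemma one_sub_Xz_ne {a : ℤ} (ha : a ≠ 0) : (1 - (RatFunc.X : Kq) ^ a) ≠ 0 := by
  intro h
  have : ((RatFunc.X : Kq) ^ a) = 1 := by linear_combination -h
  have := congrArg RatFunc.intDegree this
  rw [intDegree_X_zpow, RatFunc.intDegree_one] at this
  exact ha this

lemma one_sub_X_pow_nat (n : ℕ) (hn : 0 < n) :
    (1 - (RatFunc.X : Kq) ^ (n : ℤ)).intDegree = n := by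
  have : (1 - (RatFunc.X : Kq) ^ (n : ℤ)) =
      algebraMap ℚ[X] Kq (1 - Polynomial.X ^ n) := by
    rw [zpow_natCast, map_sub, map_one, map_pow, RatFunc.algebraMap_X]
  rw [this, RatFunc.intDegree_polynomial]
  rw [show (1 - Polynomial.X ^ n : ℚ[X]) = -(Polynomial.X ^ n - Polynomial.C 1) by simp only [map_one]; ring]
  rw [Polynomial.natDegree_neg, Polynomial.natDegree_X_pow_sub_C]

lemma intDegree_one_sub_Xz {a : ℤ} (ha : a ≠ 0) :
    (1 - (RatFunc.X : Kq) ^ a).intDegree = max a 0 := by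
  rcases lt_or_gt_of_ne ha with h | h
  · -- a < 0
    have key : (1 - (RatFunc.X : Kq) ^ a) =
        (-(1 - (RatFunc.X : Kq) ^ (-a))) * (RatFunc.X : Kq) ^ a := by
      have : (RatFunc.X : Kq) ^ (-a) * (RatFunc.X : Kq) ^ a = 1 := by
        rw [← zpow_add₀ RatFunc.X_ne_zero]; simp
      linear_combination -this
    rw [key, RatFunc.intDegree_mul (neg_ne_zero.mpr (one_sub_Xz_ne (by omega : -a ≠ 0))) (Xz_ne _),
      RatFunc.intDegree_neg, intDegree_X_zpow]
    have hna : -a = ((-a).toNat : ℤ) := by omega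
    rw [hna, one_sub_X_pow_nat _ (by omega)]
    omega
  · -- a > 0
    have hna : a = (a.toNat : ℤ) := by omega
    rw [hna, one_sub_X_pow_nat _ (by omega)]
    omega


/-- "zero or intDegree ≤ d" -/
def Bd (d : ℤ) (f : Kq) : Prop := f = 0 ∨ f.intDegree ≤ d

lemma Bd_zero (d : ℤ) : Bd d 0 := Or.inl rfl

lemma Bd_mono {d d' : ℤ} (h : d ≤ d') {f : Kq} (hf : Bd d f) : Bd d' f :=
  hf.imp id fun h' => h'.trans h

lemma Bd_add {d : ℤ} {f g : Kq} (hf : Bd d f) (hg : Bd d g) : Bd d (f + g) := by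
  rcases hf with rfl | hf
  · simpa using hg
  rcases hg with rfl | hg
  · rw [add_zero]; exact Or.inr hf
  by_cases hfg : f + g = 0
  · exact Or.inl hfg
  right
  by_cases hg0 : g = 0
  · subst hg0; simpa using hf
  exact (RatFunc.intDegree_add_le hg0 hfg).trans (max_le hf hg)

lemma Bd_mul {d e : ℤ} {f g : Kq} (hf : Bd d f) (hg : Bd e g) : Bd (d + e) (f * g) := by
  rcases hf with rfl | hf
  · simp [Bd_zero]
  rcases hg with rfl | hg
  · simp [Bd_zero]
  by_cases hf0 : f = 0
  · simp [hf0, Bd_zero]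
  by_cases hg0 : g = 0
  · simp [hg0, Bd_zero]
  right
  rw [RatFunc.intDegree_mul hf0 hg0]
  omega

lemma Bd_sum {d : ℤ} {α : Type*} (s : Finset α) (f : α → Kq) (h : ∀ a ∈ s, Bd d (f a)) :
    Bd d (∑ a ∈ s, f a) := by
  classical
  induction s using Finset.induction_on with
  | empty => simpa using Bd_zero d
  | insert _ _ hnm ih =>
    rw [Finset.sum_insert hnm]
    exact Bd_add (h _ (Finset.mem_insert_self _ _))
      (ih fun a ha => h a (Finset.mem_insert_of_mem ha))

lemma Bd_one : Bd 0 (1 : Kq) := Or.inr (by rw [RatFunc.intDegree_one])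

/-- coefficientwise bound for power series -/
def CB (d : ℤ) (f : PowerSeries Kq) : Prop := ∀ n, Bd d (PowerSeries.coeff n f)

lemma CB_one : CB 0 1 := by
  intro n
  rw [PowerSeries.coeff_one]
  split <;> simp [Bd_one, Bd_zero]

lemma CB_mul {d e : ℤ} {f g : PowerSeries Kq} (hf : CB d f) (hg : CB e g) : CB (d + e) (f * g) := by
  intro n
  rw [PowerSeries.coeff_mul]
  exact Bd_sum _ _ fun p _ => Bd_mul (hf p.1) (hg p.2)

lemma CB_pow {d : ℤ} {f : PowerSeries Kq} (hf : CB d f) (m : ℕ) : CB (m * d) (f ^ m) := by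
  induction m with
  | zero => simpa using CB_one
  | succ m ih =>
    rw [pow_succ]
    have heq : ((m + 1 : ℕ) : ℤ) * d = (m : ℤ) * d + d := by push_cast; ring
    rw [heq]
    exact CB_mul ih hf

lemma CB_prod {α : Type*} (s : Finset α) (d : α → ℤ) (f : α → PowerSeries Kq)
    (h : ∀ a ∈ s, CB (d a) (f a)) : CB (∑ a ∈ s, d a) (∏ a ∈ s, f a) := by
  classical
  induction s using Finset.induction_on with
  | empty => simpa using CB_one
  | insert _ _ hnm ih =>
    rw [Finset.sum_insert hnm, Finset.prod_insert hnm]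
    exact CB_mul (h _ (Finset.mem_insert_self _ _))
      (ih fun a ha => h a (Finset.mem_insert_of_mem ha))


/-- the inverse power series of `(1 - q^a) + q^a * X` -/
def sPS (a : ℤ) : PowerSeries Kq :=
  PowerSeries.mk fun n =>
    ((1 - (RatFunc.X : Kq) ^ a)⁻¹) ^ (n + 1) * (-((RatFunc.X : Kq) ^ a)) ^ n

lemma sPS_mul {a : ℤ} (ha : a ≠ 0) :
    (PowerSeries.C (1 - (RatFunc.X : Kq) ^ a) +
        PowerSeries.C ((RatFunc.X : Kq) ^ a) * PowerSeries.X) * sPS a = 1 := by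
  have hc : (1 - (RatFunc.X : Kq) ^ a) ≠ 0 := one_sub_Xz_ne ha
  ext n
  rw [add_mul, mul_assoc, map_add, PowerSeries.coeff_C_mul, PowerSeries.coeff_C_mul]
  cases n with
  | zero =>
    rw [PowerSeries.coeff_zero_X_mul, PowerSeries.coeff_one]
    simp only [sPS, PowerSeries.coeff_mk, zero_add, pow_one, pow_zero, mul_one, mul_zero,
      add_zero, if_true]
    rw [mul_inv_cancel₀ hc]
  | succ n =>
    rw [PowerSeries.coeff_succ_X_mul, PowerSeries.coeff_one]
    simp only [sPS, PowerSeries.coeff_mk, if_neg (Nat.succ_ne_zero n)]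
    linear_combination (((1 - (RatFunc.X : Kq) ^ a)⁻¹) ^ (n + 1) * (-((RatFunc.X : Kq) ^ a)) ^ (n + 1)) * (mul_inv_cancel₀ hc)

lemma CB_sPS {a : ℤ} (ha : a ≠ 0) : CB (-(max a 0)) (sPS a) := by
  intro n
  have hc : (1 - (RatFunc.X : Kq) ^ a) ≠ 0 := one_sub_Xz_ne ha
  right
  rw [sPS, PowerSeries.coeff_mk,
    RatFunc.intDegree_mul (pow_ne_zero _ (inv_ne_zero hc)) (pow_ne_zero _ (by simpa using Xz_ne a)),
    intDegree_pow (inv_ne_zero hc), intDegree_pow (by simpa using Xz_ne a),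
    intDegree_inv hc, intDegree_one_sub_Xz ha, RatFunc.intDegree_neg, intDegree_X_zpow]
  have h1 : a ≤ max a 0 := le_max_left _ _
  have h2 : (0:ℤ) ≤ max a 0 := le_max_right _ _
  push_cast
  nlinarith [Int.natCast_nonneg n]


end PFAux

open PFAux Polynomial

set_option maxHeartbeats 2000000 in
/-- partial fraction degree bound.  Let `e₀ > e₁ > ⋯ > e_k` be integers,
`m_j ≥ 1`, and write `∏_j (1 - q^{e_j} z)^{-m_j} = ∑_j ∑_{i=1}^{m_j} C_{ij}(q) (1 - q^{e_j} z)^{-i}`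
(partial fractions in `z` over `ℚ(q)`).  Then each nonzero coefficient `C_{ij}(q)` has
maximal `q`-degree (`intDegree`) at most `e_j - e₀`. -/
theorem partial_fraction_coefficient_degree_bound (k : ℕ)
    (e : Fin (k + 1) → ℤ) (he : StrictAnti e)
    (m : Fin (k + 1) → ℕ) (hm : ∀ j, 0 < m j)
    (C : Fin (k + 1) → ℕ → RatFunc ℚ)
    (hdecomp :
      ∏ j : Fin (k + 1),
          ((1 - RatFunc.C ((RatFunc.X : RatFunc ℚ) ^ (e j)) * (RatFunc.X : RatFunc (RatFunc ℚ))) ^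
              (m j))⁻¹ =
        ∑ j : Fin (k + 1), ∑ i ∈ Finset.range (m j),
          RatFunc.C (C j i) *
            ((1 - RatFunc.C ((RatFunc.X : RatFunc ℚ) ^ (e j)) *
                (RatFunc.X : RatFunc (RatFunc ℚ)))⁻¹) ^ (i + 1)) :
    ∀ (j : Fin (k + 1)) (i : ℕ), i < m j → C j i ≠ 0 →
      (C j i).intDegree ≤ e j - e 0 := by
  classical
  intro j i hij hCne
  -- basic objects
  set u : Fin (k+1) → RatFunc Kq := fun l =>
    1 - RatFunc.C ((RatFunc.X : Kq) ^ (e l)) * RatFunc.X with hu_def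
  set U : Fin (k+1) → Polynomial Kq := fun l =>
    1 - Polynomial.C ((RatFunc.X : Kq) ^ (e l)) * Polynomial.X with hU_def
  have hU : ∀ l, algebraMap (Polynomial Kq) (RatFunc Kq) (U l) = u l := by
    intro l
    simp [hU_def, hu_def, map_sub, map_one, map_mul, RatFunc.algebraMap_C, RatFunc.algebraMap_X]
  have hUne : ∀ l, U l ≠ 0 := by
    intro l h
    have := congrArg (fun p => Polynomial.coeff p 0) h
    simp [hU_def] at this
  have hune : ∀ l, u l ≠ 0 := by
    intro l
    rw [← hU]
    exact RatFunc.algebraMap_ne_zero (hUne l)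
  -- Step A : clear denominators
  set P : Fin (k+1) → Polynomial Kq := fun l =>
    ∑ i' ∈ Finset.range (m l), Polynomial.C (C l i') * U l ^ (m l - 1 - i') with hP_def
  set Q : Fin (k+1) → Polynomial Kq := fun l =>
    ∏ l' ∈ Finset.univ.erase l, U l' ^ m l' with hQ_def
  have hA : (1 : Polynomial Kq) = ∑ l, P l * Q l := by
    refine RatFunc.algebraMap_injective Kq ?_
    rw [map_one, map_sum]
    have hQmap : ∀ l, algebraMap (Polynomial Kq) (RatFunc Kq) (Q l) =
        ∏ l' ∈ Finset.univ.erase l, u l' ^ m l' := by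
      intro l
      simp only [hQ_def, map_prod, map_pow, hU]
    have hterm : ∀ (l : Fin (k+1)), ∀ i' ∈ Finset.range (m l),
        RatFunc.C (C l i') * ((u l)⁻¹) ^ (i' + 1) * (∏ l', u l' ^ m l') =
        algebraMap (Polynomial Kq) (RatFunc Kq)
          (Polynomial.C (C l i') * U l ^ (m l - 1 - i') * Q l) := by
      intro l i' hi'
      rw [Finset.mem_range] at hi'
      have h1 : (∏ l', u l' ^ m l') = u l ^ m l * ∏ l' ∈ Finset.univ.erase l, u l' ^ m l' :=
        (Finset.mul_prod_erase _ _ (Finset.mem_univ l)).symm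
      have h2 : u l ^ (m l - 1 - i') = ((u l)⁻¹) ^ (i' + 1) * u l ^ m l := by
        rw [show m l - 1 - i' = m l - (i' + 1) by omega, pow_sub₀ _ (hune l) (by omega), inv_pow]
        ring
      rw [h1, map_mul, map_mul, map_pow, hU l, RatFunc.algebraMap_C, hQmap l, h2]
      ring
    calc (1 : RatFunc Kq)
        = (∏ l, ((u l ^ m l)⁻¹)) * ∏ l, u l ^ m l := by
          rw [← Finset.prod_mul_distrib]
          rw [Finset.prod_congr rfl fun l _ => inv_mul_cancel₀ (pow_ne_zero (m l) (hune l))]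
          rw [Finset.prod_const_one]
      _ = (∑ l, ∑ i' ∈ Finset.range (m l), RatFunc.C (C l i') * ((u l)⁻¹) ^ (i' + 1)) *
            ∏ l, u l ^ m l := by rw [hdecomp]
      _ = ∑ l, ∑ i' ∈ Finset.range (m l),
            RatFunc.C (C l i') * ((u l)⁻¹) ^ (i' + 1) * ∏ l', u l' ^ m l' := by
          rw [Finset.sum_mul]
          exact Finset.sum_congr rfl fun l _ => Finset.sum_mul _ _ _
      _ = ∑ l, ∑ i' ∈ Finset.range (m l),
            algebraMap (Polynomial Kq) (RatFunc Kq)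
              (Polynomial.C (C l i') * U l ^ (m l - 1 - i') * Q l) :=
          Finset.sum_congr rfl fun l _ => Finset.sum_congr rfl (hterm l)
      _ = ∑ l, algebraMap (Polynomial Kq) (RatFunc Kq) (P l * Q l) := by
          refine Finset.sum_congr rfl fun l _ => ?_
          rw [hP_def]
          simp only [Finset.sum_mul, map_sum, map_mul]
  -- Step B : substitute z ↦ q^{-e j} (1 - z)
  set r : Polynomial Kq := Polynomial.C ((RatFunc.X : Kq) ^ (-e j)) * (1 - Polynomial.X)
    with hr_def
  set φc : Polynomial Kq →+* Polynomial Kq := Polynomial.eval₂RingHom Polynomial.C r with hφc_def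
  set a : Fin (k+1) → ℤ := fun l => e l - e j with ha_def
  set V : Fin (k+1) → Polynomial Kq := fun l =>
    Polynomial.C (1 - (RatFunc.X : Kq) ^ (a l)) + Polynomial.C ((RatFunc.X : Kq) ^ (a l)) *
      Polynomial.X with hV_def
  have hφC : ∀ c : Kq, φc (Polynomial.C c) = Polynomial.C c := fun c => by
    rw [hφc_def]; exact Polynomial.eval₂_C _ _
  have hφX : φc Polynomial.X = r := by
    rw [hφc_def]; exact Polynomial.eval₂_X _ _
  have hV : ∀ l, φc (U l) = V l := by
    intro l
    have hCmul : (RatFunc.X : Kq) ^ (e l) * (RatFunc.X : Kq) ^ (-e j) =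
        (RatFunc.X : Kq) ^ (a l) := by
      rw [← zpow_add₀ RatFunc.X_ne_zero,
        show e l + -e j = a l from by simp only [ha_def]; omega]
    have h1 : φc (U l) = 1 - Polynomial.C ((RatFunc.X : Kq) ^ (e l)) * r := by
      simp only [hU_def, map_sub, map_one, map_mul, hφC, hφX]
    rw [h1, hr_def, ← mul_assoc, ← Polynomial.C_mul, hCmul, hV_def]
    simp only [map_sub, map_one]
    ring
  have hVj : V j = Polynomial.X := by
    have haj : a j = 0 := by simp only [ha_def]; omega
    simp only [hV_def, haj, zpow_zero, sub_self, map_zero, map_one, zero_add, one_mul]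
  have haw : ∀ l, l ≠ j → a l ≠ 0 := by
    intro l hl h
    simp only [ha_def] at h
    exact hl (he.injective (by omega : e l = e j))
  set P' : Fin (k+1) → Polynomial Kq := fun l =>
    ∑ i' ∈ Finset.range (m l), Polynomial.C (C l i') * V l ^ (m l - 1 - i') with hP'_def
  set Q' : Fin (k+1) → Polynomial Kq := fun l =>
    ∏ l' ∈ Finset.univ.erase l, V l' ^ m l' with hQ'_def
  have hB : (1 : Polynomial Kq) = ∑ l, P' l * Q' l := by
    have hmap := congrArg φc hA
    rw [map_one, map_sum] at hmap
    refine hmap.trans (Finset.sum_congr rfl fun l _ => ?_)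
    rw [map_mul]
    congr 1
    · simp only [hP_def, hP'_def, map_sum, map_mul, map_pow, hV, hφC]
    · simp only [hQ_def, hQ'_def, map_prod, map_pow, hV]
  -- Step C : in power series
  set ψ : Polynomial Kq →+* PowerSeries Kq := Polynomial.coeToPowerSeries.ringHom with hψ_def
  have hC1 : (1 : PowerSeries Kq) = ∑ l, ψ (P' l) * ψ (Q' l) := by
    have := congrArg ψ hB
    simpa only [map_one, map_sum, map_mul] using this
  have hVψ : ∀ l, ψ (V l) = PowerSeries.C (1 - (RatFunc.X : Kq) ^ (a l)) +
      PowerSeries.C ((RatFunc.X : Kq) ^ (a l)) * PowerSeries.X := by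
    intro l
    simp [hV_def, hψ_def, Polynomial.coeToPowerSeries.ringHom_apply,
      Polynomial.coe_add, Polynomial.coe_mul, Polynomial.coe_C, Polynomial.coe_X]
  have hinv : ∀ l, l ≠ j → ψ (V l) * sPS (a l) = 1 := by
    intro l hl
    rw [hVψ l]
    exact sPS_mul (haw l hl)
  set S : PowerSeries Kq := ∏ l ∈ Finset.univ.erase j, sPS (a l) ^ m l with hS_def
  have hQjS : ψ (Q' j) * S = 1 := by
    simp only [hQ'_def, map_prod, map_pow, hS_def]
    rw [← Finset.prod_mul_distrib]
    refine Finset.prod_eq_one fun l hl => ?_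
    rw [← mul_pow, hinv l (Finset.ne_of_mem_erase hl), one_pow]
  have hS2 : S = ψ (P' j) + ∑ l ∈ Finset.univ.erase j, ψ (P' l) * ψ (Q' l) * S := by
    calc S = 1 * S := (one_mul S).symm
      _ = (∑ l, ψ (P' l) * ψ (Q' l)) * S := by rw [← hC1]
      _ = ∑ l, ψ (P' l) * ψ (Q' l) * S := Finset.sum_mul _ _ _
      _ = ψ (P' j) * ψ (Q' j) * S +
            ∑ l ∈ Finset.univ.erase j, ψ (P' l) * ψ (Q' l) * S :=
          (Finset.add_sum_erase _ _ (Finset.mem_univ j)).symm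
      _ = ψ (P' j) + ∑ l ∈ Finset.univ.erase j, ψ (P' l) * ψ (Q' l) * S := by
          rw [mul_assoc, hQjS, mul_one]
  have hdvd : (PowerSeries.X : PowerSeries Kq) ^ (m j) ∣
      ∑ l ∈ Finset.univ.erase j, ψ (P' l) * ψ (Q' l) * S := by
    refine Finset.dvd_sum fun l hl => ?_
    have hlj : l ≠ j := Finset.ne_of_mem_erase hl
    have hjl : j ∈ Finset.univ.erase l := Finset.mem_erase.mpr ⟨Ne.symm hlj, Finset.mem_univ j⟩
    have h2 : ψ (Q' l) = (PowerSeries.X : PowerSeries Kq) ^ m j *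
        ψ (∏ l' ∈ (Finset.univ.erase l).erase j, V l' ^ m l') := by
      simp only [hQ'_def]
      rw [← Finset.mul_prod_erase _ (fun l' => V l' ^ m l') hjl, map_mul, map_pow, hVj]
      congr 2
      rw [hψ_def, Polynomial.coeToPowerSeries.ringHom_apply, Polynomial.coe_X]
    rw [h2]
    exact ⟨ψ (P' l) * ψ (∏ l' ∈ (Finset.univ.erase l).erase j, V l' ^ m l') * S, by ring⟩
  have hkey : PowerSeries.coeff (m j - 1 - i) S = C j i := by
    have hn : m j - 1 - i < m j := by have := hm j; omega
    have hz : PowerSeries.coeff (m j - 1 - i)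
        (∑ l ∈ Finset.univ.erase j, ψ (P' l) * ψ (Q' l) * S) = 0 :=
      PowerSeries.X_pow_dvd_iff.mp hdvd _ hn
    rw [hS2, map_add, hz, add_zero]
    rw [hψ_def, Polynomial.coeToPowerSeries.ringHom_apply, Polynomial.coeff_coe]
    simp only [hP'_def, hVj, Polynomial.finset_sum_coeff, Polynomial.coeff_C_mul,
      Polynomial.coeff_X_pow]
    rw [Finset.sum_eq_single i]
    · rw [if_pos rfl, mul_one]
    · intro b hb hbne
      rw [Finset.mem_range] at hb
      rw [if_neg (by omega), mul_zero]
    · intro h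
      exact absurd (Finset.mem_range.mpr hij) h
  -- degree bound
  have hCB : CB (∑ l ∈ Finset.univ.erase j, (m l : ℤ) * (-(max (a l) 0))) S := by
    refine CB_prod _ _ _ fun l hl => ?_
    exact CB_pow (CB_sPS (haw l (Finset.ne_of_mem_erase hl))) (m l)
  have hD : (∑ l ∈ Finset.univ.erase j, (m l : ℤ) * (-(max (a l) 0))) ≤ e j - e 0 := by
    have hnonpos : ∀ l : Fin (k+1), (m l : ℤ) * (-(max (a l) 0)) ≤ 0 := fun l =>
      mul_nonpos_of_nonneg_of_nonpos (Int.natCast_nonneg _)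
        (neg_nonpos.mpr (le_max_right _ _))
    by_cases hj : j = 0
    · subst hj
      have : (∑ l ∈ Finset.univ.erase 0, (m l : ℤ) * (-(max (a l) 0))) ≤ 0 :=
        Finset.sum_nonpos fun l _ => hnonpos l
      omega
    · have hj0 : (0 : Fin (k+1)) ∈ Finset.univ.erase j :=
        Finset.mem_erase.mpr ⟨Ne.symm hj, Finset.mem_univ _⟩
      rw [← Finset.add_sum_erase _ _ hj0]
      have hrest : (∑ l ∈ (Finset.univ.erase j).erase 0, (m l : ℤ) * (-(max (a l) 0))) ≤ 0 :=
        Finset.sum_nonpos fun l _ => hnonpos l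
      have hejlt : e j < e 0 := he (Fin.pos_of_ne_zero hj)
      have hmax : max (a 0) 0 = e 0 - e j := by
        simp only [ha_def]
        omega
      have h1 : (1 : ℤ) ≤ (m 0 : ℤ) := by exact_mod_cast hm 0
      have h0 : (m 0 : ℤ) * (-(max (a 0) 0)) ≤ e j - e 0 := by
        rw [hmax]
        nlinarith
      linarith
  have := hCB (m j - 1 - i)
  rw [hkey] at this
  rcases this with h | h
  · exact absurd h hCne
  · exact h.trans hD
end
end

section
/- Morton-type a-degree bound for the 1-colored HOMFLY polynomial of the (2,c) torus link, c ≥ 1: the maximal degree in a of P₁(T(2,c); a, q) equals (1/2)(−c + 2), i.e. the upper bound (r/2)(−c₊ + c₋ + s₊ + s₋) with r = 1, c₊ = c, c₋ = 0, s₊ + s₋ = 2 is attained. -/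
/-- The `p`-Pochhammer symbol `(x;p)_n = ∏_{j=0}^{n-1} (1 - x p^j)`. -/
noncomputable def qPoch {K : Type*} [Field K] (x p : K) (n : ℕ) : K :=
  ∏ j ∈ Finset.range n, (1 - x * p ^ j)

/-- The explicit formula for the unreduced `r`-colored HOMFLY polynomial of the
`(2,c)` torus link, written in the variables `A = a^(1/2)` and `Q = q^(1/2)`:
`P_r(T(2,c);a,q) = (q^{r(r-1)/2} a^{r/2})^{-c} ∑_{k=0}^{r} q^{c((r-k)²-k)/2} (-1)^{c(r-k)}
a^r q^{-k-r} (qa⁻¹;q⁻¹)_k (a⁻¹;q⁻¹)_{2r-k} /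
[(q⁻¹;q⁻¹)_k (q⁻¹;q⁻¹)_{2(r-k)} (q^{-2(r-k+1)};q⁻¹)_k]`, where `a = A²`, `q = Q²`. -/
noncomputable def torusHOMFLY {K : Type*} [Field K] (A Q : K) (r : ℕ) (c : ℤ) : K :=
  (Q ^ ((r : ℤ) * ((r : ℤ) - 1)) * A ^ (r : ℤ)) ^ (-c) *
    ∑ k ∈ Finset.range (r + 1),
      Q ^ (c * (((r : ℤ) - (k : ℤ)) ^ 2 - (k : ℤ))) * (-1 : K) ^ (c * ((r : ℤ) - (k : ℤ))) *
        A ^ (2 * (r : ℤ)) * Q ^ (2 * (-(k : ℤ) - (r : ℤ))) *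
        qPoch (Q ^ 2 * (A ^ 2)⁻¹) ((Q ^ 2)⁻¹) k * qPoch ((A ^ 2)⁻¹) ((Q ^ 2)⁻¹) (2 * r - k) /
        (qPoch ((Q ^ 2)⁻¹) ((Q ^ 2)⁻¹) k * qPoch ((Q ^ 2)⁻¹) ((Q ^ 2)⁻¹) (2 * (r - k)) *
          qPoch ((Q ^ 2) ^ (-2 * ((r : ℤ) - (k : ℤ) + 1))) ((Q ^ 2)⁻¹) k)

lemma my_intDegree_inv {K : Type*} [Field K] (f : RatFunc K) :
    f⁻¹.intDegree = -f.intDegree := by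
  by_cases hf : f = 0
  · simp [hf, RatFunc.intDegree_zero]
  · have h := RatFunc.intDegree_mul hf (inv_ne_zero hf)
    rw [mul_inv_cancel₀ hf, RatFunc.intDegree_one] at h
    linarith

lemma my_intDegree_X_pow {K : Type*} [Field K] (n : ℕ) :
    ((RatFunc.X : RatFunc K) ^ n).intDegree = n := by
  rw [← RatFunc.algebraMap_X, ← map_pow, RatFunc.intDegree_polynomial,
    Polynomial.natDegree_X_pow]

lemma my_intDegree_X_zpow {K : Type*} [Field K] (n : ℤ) :
    ((RatFunc.X : RatFunc K) ^ n).intDegree = n := by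
  obtain ⟨m, rfl | rfl⟩ := Int.eq_nat_or_neg n
  · rw [zpow_natCast, my_intDegree_X_pow]
  · rw [zpow_neg, my_intDegree_inv, zpow_natCast, my_intDegree_X_pow]

set_option maxHeartbeats 2000000 in
lemma key_s14 {K : Type*} [Field K] (A Q : K) (c : ℤ) (hA : A ≠ 0) (hQ : Q ≠ 0)
    (h2 : (1 : K) - (Q ^ 2)⁻¹ ≠ 0) (h4 : (1 : K) - ((Q ^ 2) ^ 2)⁻¹ ≠ 0) :
    torusHOMFLY A Q 1 c =
      (A ^ c)⁻¹ * (A ^ 2)⁻¹ *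
        (((1 - (Q ^ 2)⁻¹) * (1 - ((Q ^ 2) ^ 2)⁻¹))⁻¹ * (A ^ 2 - 1) *
          (((-1 : K) ^ c * Q ^ c * (Q ^ 2)⁻¹ + (Q ^ c)⁻¹ * ((Q ^ 2) ^ 2)⁻¹) * A ^ 2
            - ((-1 : K) ^ c * Q ^ c * ((Q ^ 2) ^ 2)⁻¹ + (Q ^ c)⁻¹ * (Q ^ 2)⁻¹))) := by
  have hAc : A ^ c ≠ 0 := zpow_ne_zero c hA
  have hQc : Q ^ c ≠ 0 := zpow_ne_zero c hQ
  simp only [torusHOMFLY, qPoch]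
  norm_num [Finset.sum_range_succ, Finset.prod_range_succ]
  rw [mul_assoc ((A ^ c)⁻¹)]
  congr 1
  have e : ((Q : K) ^ 2)⁻¹ * (Q ^ 2)⁻¹ = ((Q ^ 2) ^ 2)⁻¹ := by rw [← mul_inv, ← sq]
  have h2' : (Q : K) ^ 2 - 1 ≠ 0 := by
    intro h; rw [sub_eq_zero] at h; apply h2; rw [h, inv_one, sub_self]
  have h4' : ((Q : K) ^ 2) ^ 2 - 1 ≠ 0 := by
    intro h; rw [sub_eq_zero] at h; apply h4; rw [h, inv_one, sub_self]
  have f2 : (1 - ((Q : K) ^ 2)⁻¹) = (Q ^ 2 - 1) / Q ^ 2 := by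
    rw [sub_div, div_self (pow_ne_zero 2 hQ), one_div]
  have f4 : (1 - (((Q : K) ^ 2) ^ 2)⁻¹) = ((Q ^ 2) ^ 2 - 1) / (Q ^ 2) ^ 2 := by
    rw [sub_div, div_self (pow_ne_zero 2 (pow_ne_zero 2 hQ)), one_div]
  rw [e, f2, f4]
  set x := Q ^ c with hxd
  set y := (-1 : K) ^ c with hyd
  have f4' : (1 : K) - 1 / ((Q : K) ^ 2) ^ 2 = ((Q ^ 2) ^ 2 - 1) / (Q ^ 2) ^ 2 := by
    rw [one_div]; exact f4
  field_simp [h2', h4']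
  have hb : (Q : K) ^ 2 * (A ^ 2 * (A ^ 2 * Q ^ 2)) * ((Q ^ 2 - 1) * ((Q ^ 2) ^ 2 - 1)) ≠ 0 := by
    apply_rules [mul_ne_zero, pow_ne_zero]
  have hd : x * (Q : K) ^ 4 * A ^ 2 * A ^ 2 * ((Q ^ 2 - 1) * ((Q ^ 2) ^ 2 - 1)) ≠ 0 := by
    apply_rules [mul_ne_zero, pow_ne_zero]
  have hf : (A : K) ^ 2 * (((Q ^ 2) ^ 2 - 1) * (Q ^ 2 - 1) *
      (Q ^ 2 * (x * (Q ^ 2) ^ 2) * ((Q ^ 2) ^ 2 * (x * Q ^ 2)))) ≠ 0 := by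
    apply_rules [mul_ne_zero, pow_ne_zero]
  ring

lemma my_intDegree_neg_one_zpow_mul {K : Type*} [Field K] (c : ℤ) (z : RatFunc K) :
    (((-1 : RatFunc K) ^ c) * z).intDegree = z.intDegree := by
  rcases Int.even_or_odd c with hc | hc
  · rw [hc.neg_one_zpow, one_mul]
  · rw [hc.neg_one_zpow, neg_one_mul, RatFunc.intDegree_neg]

/-- Morton-type `a`-degree bound for the `1`-colored HOMFLY polynomial of
the `(2,c)` torus link, `c ≥ 1`: the maximal `a`-degree of `P₁(T(2,c);a,q)` equals
`(1/2)(-c+2)`, i.e. the degree in `A = a^(1/2)` (outer variable, with coefficients in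
`ℚ(Q)`) equals `-c + 2`, attaining the bound `(r/2)(-c₊+c₋+s₊+s₋)`. -/
theorem torus_two_braid_a_degree (c : ℤ) (hc : 1 ≤ c) :
    (torusHOMFLY (RatFunc.X : RatFunc (RatFunc ℚ)) (RatFunc.C (RatFunc.X : RatFunc ℚ)) 1
        c).intDegree = -c + 2 := by
  have hXF : (RatFunc.X : RatFunc ℚ) ≠ 0 := RatFunc.X_ne_zero
  have hA : (RatFunc.X : RatFunc (RatFunc ℚ)) ≠ 0 := RatFunc.X_ne_zero
  have hCinj : Function.Injective (RatFunc.C : RatFunc ℚ →+* RatFunc (RatFunc ℚ)) := (RatFunc.C : RatFunc ℚ →+* RatFunc (RatFunc ℚ)).injective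
  have hQ : (RatFunc.C (RatFunc.X : RatFunc ℚ) : RatFunc (RatFunc ℚ)) ≠ 0 := by
    intro h; exact hXF (hCinj (by simpa using h))
  -- inner denominators
  have hd2 : (1 : RatFunc ℚ) - ((RatFunc.X : RatFunc ℚ) ^ 2)⁻¹ ≠ 0 := by
    intro h
    rw [sub_eq_zero] at h
    have h2 := congrArg RatFunc.intDegree h
    rw [RatFunc.intDegree_one, my_intDegree_inv, my_intDegree_X_pow] at h2
    norm_num at h2
  have hd4 : (1 : RatFunc ℚ) - (((RatFunc.X : RatFunc ℚ) ^ 2) ^ 2)⁻¹ ≠ 0 := by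
    intro h
    rw [sub_eq_zero] at h
    have h2 := congrArg RatFunc.intDegree h
    rw [RatFunc.intDegree_one, my_intDegree_inv, ← pow_mul, my_intDegree_X_pow] at h2
    norm_num at h2
  have hw : (((1 : RatFunc ℚ) - ((RatFunc.X : RatFunc ℚ) ^ 2)⁻¹) * ((1 : RatFunc ℚ) - (((RatFunc.X : RatFunc ℚ) ^ 2) ^ 2)⁻¹))⁻¹ ≠ 0 :=
    inv_ne_zero (mul_ne_zero hd2 hd4)
  -- nonzero u
  set u : RatFunc ℚ := (-1 : RatFunc ℚ) ^ c * (RatFunc.X : RatFunc ℚ) ^ c * ((RatFunc.X : RatFunc ℚ) ^ 2)⁻¹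
      + ((RatFunc.X : RatFunc ℚ) ^ c)⁻¹ * (((RatFunc.X : RatFunc ℚ) ^ 2) ^ 2)⁻¹ with hu_def
  set v : RatFunc ℚ := (-1 : RatFunc ℚ) ^ c * (RatFunc.X : RatFunc ℚ) ^ c * (((RatFunc.X : RatFunc ℚ) ^ 2) ^ 2)⁻¹
      + ((RatFunc.X : RatFunc ℚ) ^ c)⁻¹ * ((RatFunc.X : RatFunc ℚ) ^ 2)⁻¹ with hv_def
  set w : RatFunc ℚ := (((1 : RatFunc ℚ) - ((RatFunc.X : RatFunc ℚ) ^ 2)⁻¹) * ((1 : RatFunc ℚ) - (((RatFunc.X : RatFunc ℚ) ^ 2) ^ 2)⁻¹))⁻¹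
    with hw_def
  have hXc : ((RatFunc.X : RatFunc ℚ) ^ c) ≠ 0 := zpow_ne_zero c hXF
  have hdeg1 : ((RatFunc.X : RatFunc ℚ) ^ c * ((RatFunc.X : RatFunc ℚ) ^ 2)⁻¹).intDegree = c - 2 := by
    rw [RatFunc.intDegree_mul hXc (inv_ne_zero (pow_ne_zero 2 hXF)), my_intDegree_X_zpow,
      my_intDegree_inv, my_intDegree_X_pow]
    omega
  have hdeg2 : (((RatFunc.X : RatFunc ℚ) ^ c)⁻¹ * (((RatFunc.X : RatFunc ℚ) ^ 2) ^ 2)⁻¹).intDegree = -c - 4 := by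
    rw [RatFunc.intDegree_mul (inv_ne_zero hXc) (inv_ne_zero (pow_ne_zero 2 (pow_ne_zero 2 hXF))),
      my_intDegree_inv, my_intDegree_X_zpow, my_intDegree_inv, ← pow_mul, my_intDegree_X_pow]
    omega
  have hu : u ≠ 0 := by
    intro h
    rw [hu_def] at h
    have h' := congrArg RatFunc.intDegree (eq_neg_of_add_eq_zero_left h)
    rw [mul_assoc, my_intDegree_neg_one_zpow_mul, RatFunc.intDegree_neg, hdeg1, hdeg2] at h'
    omega
  -- the polynomial
  set p : Polynomial (RatFunc ℚ) := Polynomial.C w * (Polynomial.X ^ 2 - 1) *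
      (Polynomial.C u * Polynomial.X ^ 2 - Polynomial.C v) with hp_def
  have hp1 : (Polynomial.C w : Polynomial (RatFunc ℚ)) ≠ 0 := Polynomial.C_ne_zero.mpr hw
  have hn2 : ((Polynomial.X : Polynomial (RatFunc ℚ)) ^ 2 - 1).natDegree = 2 := by compute_degree!
  have hp2 : ((Polynomial.X : Polynomial (RatFunc ℚ)) ^ 2 - 1) ≠ 0 := by
    intro h; rw [h] at hn2; simp at hn2
  have hn3 : (Polynomial.C u * Polynomial.X ^ 2 - Polynomial.C v).natDegree = 2 := by
    compute_degree!
  have hp3 : (Polynomial.C u * Polynomial.X ^ 2 - Polynomial.C v) ≠ 0 := by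
    intro h; rw [h] at hn3; simp at hn3
  have hpne : p ≠ 0 := mul_ne_zero (mul_ne_zero hp1 hp2) hp3
  have hpdeg : p.natDegree = 4 := by
    rw [hp_def, Polynomial.natDegree_mul (mul_ne_zero hp1 hp2) hp3,
      Polynomial.natDegree_mul hp1 hp2, Polynomial.natDegree_C, hn2, hn3]
  -- the key rewrite
  rw [key_s14 _ _ c hA hQ (by
      have : ((RatFunc.C (RatFunc.X : RatFunc ℚ) : RatFunc (RatFunc ℚ)) ^ 2)⁻¹ = RatFunc.C (((RatFunc.X : RatFunc ℚ) ^ 2)⁻¹) := by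
        rw [map_inv₀, map_pow]
      rw [this, ← map_one (RatFunc.C : RatFunc ℚ →+* RatFunc (RatFunc ℚ)), ← map_sub]
      exact fun h => hd2 (hCinj (by simpa using h)))
    (by
      have : (((RatFunc.C (RatFunc.X : RatFunc ℚ) : RatFunc (RatFunc ℚ)) ^ 2) ^ 2)⁻¹
          = RatFunc.C ((((RatFunc.X : RatFunc ℚ) ^ 2) ^ 2)⁻¹) := by
        rw [map_inv₀, map_pow, map_pow]
      rw [this, ← map_one (RatFunc.C : RatFunc ℚ →+* RatFunc (RatFunc ℚ)), ← map_sub]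
      exact fun h => hd4 (hCinj (by simpa using h)))]
  have hrepr : (((1 : RatFunc (RatFunc ℚ)) - ((RatFunc.C (RatFunc.X : RatFunc ℚ) : RatFunc (RatFunc ℚ)) ^ 2)⁻¹) *
        ((1 : RatFunc (RatFunc ℚ)) - (((RatFunc.C (RatFunc.X : RatFunc ℚ) : RatFunc (RatFunc ℚ)) ^ 2) ^ 2)⁻¹))⁻¹ *
        ((RatFunc.X : RatFunc (RatFunc ℚ)) ^ 2 - 1) *
        (((-1 : RatFunc (RatFunc ℚ)) ^ c * (RatFunc.C (RatFunc.X : RatFunc ℚ) : RatFunc (RatFunc ℚ)) ^ c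
            * ((RatFunc.C (RatFunc.X : RatFunc ℚ) : RatFunc (RatFunc ℚ)) ^ 2)⁻¹
          + ((RatFunc.C (RatFunc.X : RatFunc ℚ) : RatFunc (RatFunc ℚ)) ^ c)⁻¹
            * (((RatFunc.C (RatFunc.X : RatFunc ℚ) : RatFunc (RatFunc ℚ)) ^ 2) ^ 2)⁻¹) * (RatFunc.X : RatFunc (RatFunc ℚ)) ^ 2
          - ((-1 : RatFunc (RatFunc ℚ)) ^ c * (RatFunc.C (RatFunc.X : RatFunc ℚ) : RatFunc (RatFunc ℚ)) ^ c
              * (((RatFunc.C (RatFunc.X : RatFunc ℚ) : RatFunc (RatFunc ℚ)) ^ 2) ^ 2)⁻¹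
            + ((RatFunc.C (RatFunc.X : RatFunc ℚ) : RatFunc (RatFunc ℚ)) ^ c)⁻¹
              * ((RatFunc.C (RatFunc.X : RatFunc ℚ) : RatFunc (RatFunc ℚ)) ^ 2)⁻¹))
      = algebraMap (Polynomial (RatFunc ℚ)) (RatFunc (RatFunc ℚ)) p := by
    rw [hp_def, hu_def, hv_def, hw_def]
    simp only [map_mul, map_sub, map_add, map_pow, map_one, map_inv₀, map_zpow₀, map_neg,
      RatFunc.algebraMap_C, RatFunc.algebraMap_X]
  rw [hrepr]
  have h1 : ((RatFunc.X : RatFunc (RatFunc ℚ)) ^ c)⁻¹ ≠ 0 := inv_ne_zero (zpow_ne_zero c hA)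
  have h2 : ((RatFunc.X : RatFunc (RatFunc ℚ)) ^ 2)⁻¹ ≠ 0 := inv_ne_zero (pow_ne_zero 2 hA)
  have h3 : algebraMap (Polynomial (RatFunc ℚ)) (RatFunc (RatFunc ℚ)) p ≠ 0 := RatFunc.algebraMap_ne_zero hpne
  rw [RatFunc.intDegree_mul (mul_ne_zero h1 h2) h3, RatFunc.intDegree_mul h1 h2,
    my_intDegree_inv, my_intDegree_X_zpow, my_intDegree_inv, my_intDegree_X_pow,
    RatFunc.intDegree_polynomial, hpdeg]
  omega
end
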